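/- Every 2-dimensional subspace of ℂ² ⊗ ℂ² contains at least one nonzero product vector. -/

import Mathlib

open Polynomial

lemma aux_prod (M : Matrix (Fin 2) (Fin 2) ℂ)
    (h : M 0 0 * M 1 1 - M 0 1 * M 1 0 = 0) :
    ∃ (b c : Fin 2 → ℂ), ∀ i j, M i j = b i * c j := by
  by_cases h0 : M 0 0 = 0
  · by_cases h1 : M 0 1 = 0
    · refine ⟨![0, 1], ![M 1 0, M 1 1], ?_⟩
      intro i j
      fin_cases i <;> fin_cases j <;> simp [h0, h1]
    · -- M 0 0 = 0, so M 0 1 * M 1 0 = 0, so M 1 0 = 0 : first column zero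
      have h10 : M 1 0 = 0 := by
        have : M 0 1 * M 1 0 = 0 := by rw [h0] at h; linear_combination -h
        rcases mul_eq_zero.mp this with h' | h'
        · exact absurd h' h1
        · exact h'
      refine ⟨![M 0 1, M 1 1], ![0, 1], ?_⟩
      intro i j
      fin_cases i <;> fin_cases j <;> simp [h0, h10]
  · refine ⟨![M 0 0, M 1 0], ![1, M 0 1 / M 0 0], ?_⟩
    intro i j
    fin_cases i <;> fin_cases j <;> simp
    · field_simp
    · field_simp
      linear_combination h

theorem stmt_15 (V : Submodule ℂ (Matrix (Fin 2) (Fin 2) ℂ))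
    (hV : Module.finrank ℂ V = 2) :
    ∃ a ∈ V, a ≠ 0 ∧ ∃ (b c : Fin 2 → ℂ), ∀ i j, a i j = b i * c j := by
  have bV : Module.Basis (Fin 2) ℂ V := (Module.finBasis ℂ V).reindex (finCongr hV)
  set A : Matrix (Fin 2) (Fin 2) ℂ := ((bV 0 : V) : Matrix (Fin 2) (Fin 2) ℂ) with hA
  set B : Matrix (Fin 2) (Fin 2) ℂ := ((bV 1 : V) : Matrix (Fin 2) (Fin 2) ℂ) with hB
  have hAV : A ∈ V := (bV 0).2
  have hBV : B ∈ V := (bV 1).2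
  have li : LinearIndependent ℂ (fun i => ((bV i : V) : Matrix (Fin 2) (Fin 2) ℂ)) :=
    bV.linearIndependent.map' V.subtype V.ker_subtype
  have key : ∀ t : ℂ, A + t • B ≠ 0 := by
    intro t ht
    have := (Fintype.linearIndependent_iff.mp li) ![1, t] ?_ 0
    · simp at this
    · rw [Fin.sum_univ_two]
      simpa using ht
  have hBne : B ≠ 0 := by
    intro hb
    have := (Fintype.linearIndependent_iff.mp li) ![0, 1] ?_ 1
    · simp at this
    · rw [Fin.sum_univ_two]
      show (0:ℂ) • A + (1:ℂ) • B = 0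
      simp [hb]
  by_cases hdB : B 0 0 * B 1 1 - B 0 1 * B 1 0 = 0
  · exact ⟨B, hBV, hBne, aux_prod B hdB⟩
  · -- quadratic p(t) = det (A + t B) has a root
    set p : ℂ[X] := C (A 0 0 * A 1 1 - A 0 1 * A 1 0)
        + C (A 0 0 * B 1 1 + B 0 0 * A 1 1 - A 0 1 * B 1 0 - B 0 1 * A 1 0) * X
        + C (B 0 0 * B 1 1 - B 0 1 * B 1 0) * X ^ 2 with hp
    have hc2 : p.coeff 2 = B 0 0 * B 1 1 - B 0 1 * B 1 0 := by
      rw [hp, coeff_add, coeff_add, coeff_C, coeff_C_mul, coeff_C_mul, coeff_X_pow, coeff_X]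
      norm_num
    have hdeg : 0 < p.degree := by
      calc (0 : WithBot ℕ) < 2 := by norm_num
        _ ≤ p.degree := le_degree_of_ne_zero (by rw [hc2]; exact hdB)
    obtain ⟨t, ht⟩ := Complex.exists_root hdeg
    have heval : (A + t • B) 0 0 * (A + t • B) 1 1 - (A + t • B) 0 1 * (A + t • B) 1 0 = 0 := by
      have := ht
      simp [IsRoot, hp, eval_mul, eval_add] at this
      simp [Matrix.add_apply, Matrix.smul_apply, smul_eq_mul]
      linear_combination this
    refine ⟨A + t • B, V.add_mem hAV (V.smul_mem t hBV), key t, aux_prod _ heval⟩
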